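/- Let A be a DFA with n states, P a set of compressible pairs of states with synchronizing height h(P), and p(P) the maximal length of a Frankl–Pin sequence over P. Then for every compressible m-subset M of Q (2 ≤ m ≤ n), there exists a word w compressing M (i.e., |Mw| < |M|) with |w| ≤ C(n-m+2, 2) − p(P) + h(P). -/

import Mathlib

open Finset

/-- Action of a word on a state. -/
def actW {Q A : Type*} (δ : Q → A → Q) (q : Q) (w : List A) : Q := w.foldl δ q

/-- Image of the full state set under a word. -/
def img {Q A : Type*} [Fintype Q] [DecidableEq Q] (δ : Q → A → Q) (w : List A) : Finset Q :=
  Finset.univ.image (fun q => actW δ q w)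

lemma actW_append {Q A : Type*} (δ : Q → A → Q) (q : Q) (w₁ w₂ : List A) :
    actW δ q (w₁ ++ w₂) = actW δ (actW δ q w₁) w₂ := by simp [actW, List.foldl_append]

lemma card_image_lt {α β : Type*} [DecidableEq α] [DecidableEq β] {s : Finset α} {f : α → β}
    {a b : α} (ha : a ∈ s) (hb : b ∈ s) (hab : a ≠ b) (hf : f a = f b) :
    (s.image f).card < s.card := by
  have himg : s.image f = (s.erase a).image f := by
    apply Finset.Subset.antisymm
    · intro z hz
      obtain ⟨c, hc, rfl⟩ := Finset.mem_image.mp hz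
      by_cases hca : c = a
      · subst hca
        exact Finset.mem_image.mpr ⟨b, Finset.mem_erase.mpr ⟨hab.symm, hb⟩, hf.symm⟩
      · exact Finset.mem_image.mpr ⟨c, Finset.mem_erase.mpr ⟨hca, hc⟩, rfl⟩
    · exact Finset.image_subset_image (Finset.erase_subset _ _)
  calc (s.image f).card = ((s.erase a).image f).card := by rw [himg]
    _ ≤ (s.erase a).card := Finset.card_image_le
    _ < s.card := Finset.card_erase_lt_of_mem ha


lemma sum_pairs (N : ℕ) (a : Fin N → ℝ) (u v : ℝ) :
    ∑ p : {p : Fin N × Fin N // p.1 ≤ p.2},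
      (a p.1.1 * a p.1.2) *
        (if p.1.1 = p.1.2 then u ^ (p.1.1 : ℕ) * v ^ (p.1.1 : ℕ)
         else u ^ (p.1.1 : ℕ) * v ^ (p.1.2 : ℕ) + u ^ (p.1.2 : ℕ) * v ^ (p.1.1 : ℕ))
    = (∑ r : Fin N, a r * u ^ (r : ℕ)) * (∑ s : Fin N, a s * v ^ (s : ℕ)) := by
  classical
  set g : Fin N × Fin N → ℝ := fun p => a p.1 * a p.2 * (u ^ (p.1 : ℕ) * v ^ (p.2 : ℕ)) with hg
  set F : Fin N × Fin N → ℝ := fun p => (a p.1 * a p.2) *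
        (if p.1 = p.2 then u ^ (p.1 : ℕ) * v ^ (p.1 : ℕ)
         else u ^ (p.1 : ℕ) * v ^ (p.2 : ℕ) + u ^ (p.2 : ℕ) * v ^ (p.1 : ℕ)) with hF
  have hRHS : (∑ r : Fin N, a r * u ^ (r : ℕ)) * (∑ s : Fin N, a s * v ^ (s : ℕ))
      = ∑ p : Fin N × Fin N, g p := by
    rw [Finset.sum_mul_sum, Fintype.sum_prod_type]
    simp only [hg]
    congr 1; ext r; congr 1; ext s; ring
  rw [hRHS]
  rw [← Finset.sum_subtype (Finset.univ.filter (fun p : Fin N × Fin N => p.1 ≤ p.2))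
      (by intro x; simp) F]
  -- decompose both sides
  have hfilter_eq : (Finset.univ.filter (fun p : Fin N × Fin N => p.1 ≤ p.2)).filter
      (fun p => p.1 = p.2) = Finset.univ.filter (fun p : Fin N × Fin N => p.1 = p.2) := by
    rw [Finset.filter_filter]
    apply Finset.filter_congr
    intro p _
    constructor
    · exact fun h => h.2
    · exact fun h => ⟨le_of_eq h, h⟩
  have hfilter_lt : (Finset.univ.filter (fun p : Fin N × Fin N => p.1 ≤ p.2)).filter
      (fun p => ¬ p.1 = p.2) = Finset.univ.filter (fun p : Fin N × Fin N => p.1 < p.2) := by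
    rw [Finset.filter_filter]
    apply Finset.filter_congr
    intro p _
    constructor
    · exact fun h => lt_of_le_of_ne h.1 h.2
    · exact fun h => ⟨le_of_lt h, ne_of_lt h⟩
  have hL : ∑ p ∈ Finset.univ.filter (fun p : Fin N × Fin N => p.1 ≤ p.2), F p
      = (∑ p ∈ Finset.univ.filter (fun p : Fin N × Fin N => p.1 = p.2), F p)
        + ∑ p ∈ Finset.univ.filter (fun p : Fin N × Fin N => p.1 < p.2), F p := by
    rw [← Finset.sum_filter_add_sum_filter_not
      (Finset.univ.filter (fun p : Fin N × Fin N => p.1 ≤ p.2)) (fun p => p.1 = p.2) F,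
      hfilter_eq, hfilter_lt]
  have hfilter_eq' : (Finset.univ : Finset (Fin N × Fin N)).filter
      (fun p => p.1 ≤ p.2) = Finset.univ.filter (fun p : Fin N × Fin N => p.1 = p.2)
        ∪ Finset.univ.filter (fun p : Fin N × Fin N => p.1 < p.2) := by
    rw [← Finset.filter_or]
    apply Finset.filter_congr
    intro p _
    constructor
    · exact fun h => (lt_or_eq_of_le h).symm
    · rintro (h | h); · exact le_of_eq h
      · exact le_of_lt h
  have hR : ∑ p : Fin N × Fin N, g p
      = ((∑ p ∈ Finset.univ.filter (fun p : Fin N × Fin N => p.1 = p.2), g p)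
        + ∑ p ∈ Finset.univ.filter (fun p : Fin N × Fin N => p.1 < p.2), g p)
        + ∑ p ∈ Finset.univ.filter (fun p : Fin N × Fin N => p.2 < p.1), g p := by
    rw [← Finset.sum_filter_add_sum_filter_not
      (Finset.univ : Finset (Fin N × Fin N)) (fun p => p.1 ≤ p.2) g]
    congr 1
    · rw [hfilter_eq']
      rw [Finset.sum_union]
      rw [Finset.disjoint_filter]
      intro p _ h
      simp [h]
    · apply Finset.sum_congr
      · apply Finset.filter_congr
        intro p _
        simp [not_le]
      · intros; rfl
  rw [hL, hR]
  have hswap : ∑ p ∈ Finset.univ.filter (fun p : Fin N × Fin N => p.2 < p.1), g p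
      = ∑ p ∈ Finset.univ.filter (fun p : Fin N × Fin N => p.1 < p.2), g p.swap := by
    apply Finset.sum_nbij' (i := Prod.swap) (j := Prod.swap) <;>
      simp [Prod.swap]
  rw [hswap]
  have hdiag : ∑ p ∈ Finset.univ.filter (fun p : Fin N × Fin N => p.1 = p.2), F p
      = ∑ p ∈ Finset.univ.filter (fun p : Fin N × Fin N => p.1 = p.2), g p := by
    apply Finset.sum_congr rfl
    intro p hp
    simp only [Finset.mem_filter] at hp
    simp only [hF, hg, hp.2, eq_self_iff_true, if_true]
  have hoff : ∑ p ∈ Finset.univ.filter (fun p : Fin N × Fin N => p.1 < p.2), F p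
      = ∑ p ∈ Finset.univ.filter (fun p : Fin N × Fin N => p.1 < p.2), g p
        + ∑ p ∈ Finset.univ.filter (fun p : Fin N × Fin N => p.1 < p.2), g p.swap := by
    rw [← Finset.sum_add_distrib]
    apply Finset.sum_congr rfl
    intro p hp
    simp only [Finset.mem_filter] at hp
    simp only [hF, hg, if_neg (ne_of_lt hp.2), Prod.swap]
    ring
  rw [hdiag, hoff]
  ring

lemma frankl_bound {Q : Type*} [Fintype Q] [DecidableEq Q] (m ℓ : ℕ)
    (N : Fin ℓ → Finset Q) (x y : Fin ℓ → Q)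
    (hcard : ∀ i, (N i).card = m) (hxmem : ∀ i, x i ∈ N i) (hymem : ∀ i, y i ∈ N i)
    (hcond : ∀ i j, j < i → x i ∉ N j ∨ y i ∉ N j) :
    ℓ ≤ (Fintype.card Q - m + 2).choose 2 := by
  classical
  set b := Fintype.card Q - m with hb
  obtain ⟨t, ht⟩ : ∃ t : Q → ℝ, Function.Injective t :=
    ⟨fun q => ((Fintype.equivFin Q q : ℕ) : ℝ), by
      intro q1 q2 h12
      have h : (Fintype.equivFin Q q1 : ℕ) = (Fintype.equivFin Q q2 : ℕ) := Nat.cast_injective h12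
      exact (Fintype.equivFin Q).injective (Fin.ext h)⟩
  set B : Fin ℓ → Finset Q := fun i => (N i)ᶜ with hBdef
  set e : Fin ℓ → Polynomial ℝ := fun i => ∏ q ∈ B i, (Polynomial.X - Polynomial.C (t q))
    with hedef
  have hdeg : ∀ i, (e i).natDegree < b + 1 := by
    intro i
    have h1 : (e i).natDegree ≤ ∑ q ∈ B i, (Polynomial.X - Polynomial.C (t q)).natDegree :=
      Polynomial.natDegree_prod_le _ _
    have h2 : ∑ q ∈ B i, (Polynomial.X - Polynomial.C (t q)).natDegree = (B i).card := by
      simp [Polynomial.natDegree_X_sub_C]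
    have h3 : (B i).card = b := by
      rw [hBdef]; simp only [Finset.card_compl, hcard]; exact hb.symm
    omega
  have hsum : ∀ i (z : ℝ), ∑ r : Fin (b+1), (e i).coeff r * z ^ (r : ℕ)
      = ∏ q ∈ B i, (z - t q) := by
    intro i z
    have h1 : (e i).eval z = ∏ q ∈ B i, (z - t q) := by
      rw [hedef]; simp [Polynomial.eval_prod]
    rw [← h1, Polynomial.eval_eq_sum_range' (hdeg i), ← Fin.sum_univ_eq_sum_range]
  set C : Matrix (Fin ℓ) {p : Fin (b+1) × Fin (b+1) // p.1 ≤ p.2} ℝ :=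
    fun i p => (e i).coeff p.1.1 * (e i).coeff p.1.2 with hCdef
  set D : Matrix {p : Fin (b+1) × Fin (b+1) // p.1 ≤ p.2} (Fin ℓ) ℝ := fun p j =>
    (if p.1.1 = p.1.2 then t (x j) ^ (p.1.1 : ℕ) * t (y j) ^ (p.1.1 : ℕ)
     else t (x j) ^ (p.1.1 : ℕ) * t (y j) ^ (p.1.2 : ℕ)
       + t (x j) ^ (p.1.2 : ℕ) * t (y j) ^ (p.1.1 : ℕ)) with hDdef
  have hG : ∀ i j, (C * D) i j
      = (∏ q ∈ B i, (t (x j) - t q)) * ∏ q ∈ B i, (t (y j) - t q) := by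
    intro i j
    rw [Matrix.mul_apply]
    rw [hCdef, hDdef]
    have := sum_pairs (b+1) (fun r => (e i).coeff r) (t (x j)) (t (y j))
    simp only at this ⊢
    rw [this, hsum, hsum]
  have hdiag : ∀ i, (C * D) i i ≠ 0 := by
    intro i
    rw [hG]
    have key : ∀ z : Q, z ∈ N i → (∏ q ∈ B i, (t z - t q)) ≠ 0 := by
      intro z hz
      apply Finset.prod_ne_zero_iff.mpr
      intro q hq hzero
      have hq' : q ∉ N i := by rw [hBdef] at hq; simpa using hq
      have hzq : z = q := ht (sub_eq_zero.mp hzero)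
      exact hq' (hzq ▸ hz)
    exact mul_ne_zero (key _ (hxmem i)) (key _ (hymem i))
  have htri : ∀ i j, i < j → (C * D) i j = 0 := by
    intro i j hij
    rw [hG]
    rcases hcond j i hij with hx | hy
    · apply mul_eq_zero_of_left
      apply Finset.prod_eq_zero (i := x j) (by rw [hBdef]; exact Finset.mem_compl.mpr hx)
      simp
    · apply mul_eq_zero_of_right
      apply Finset.prod_eq_zero (i := y j) (by rw [hBdef]; exact Finset.mem_compl.mpr hy)
      simp
  have hdet : (C * D).det ≠ 0 := by
    have htr : (C * D).BlockTriangular OrderDual.toDual := by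
      intro i j hji
      exact htri i j hji
    rw [Matrix.det_of_lowerTriangular _ htr]
    exact Finset.prod_ne_zero_iff.mpr fun i _ => hdiag i
  have hu : IsUnit (C * D) := (Matrix.isUnit_iff_isUnit_det _).mpr (isUnit_iff_ne_zero.mpr hdet)
  have hrank : (C * D).rank = ℓ := by rw [Matrix.rank_of_isUnit _ hu, Fintype.card_fin]
  have hle : (C * D).rank ≤ Fintype.card {p : Fin (b+1) × Fin (b+1) // p.1 ≤ p.2} :=
    le_trans (Matrix.rank_mul_le_right C D) (Matrix.rank_le_card_height D)
  have hcardS : Fintype.card {p : Fin (b+1) × Fin (b+1) // p.1 ≤ p.2} = (b + 2).choose 2 := by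
    rw [← Fintype.card_congr (Sym2.sortEquiv (α := Fin (b+1)))]
    rw [Sym2.card, Fintype.card_fin]
  rw [hrank, hcardS] at hle
  exact hle

/-- Theorem 1 of the paper: the Frankl–Pin bound improved by the negative summand
p(P) - h(P), where h is the synchronizing height of the set P of compressible pairs
and p is the (maximal achievable) length of a Frankl–Pin sequence over P.
(Stated in the truncation-free form  |w| + p ≤ C(n-m+2,2) + h.) -/
theorem compress_bound_with_pairs {Q A : Type*} [Fintype Q] [DecidableEq Q]
    (δ : Q → A → Q) (P : Finset (Q × Q)) (h p : ℕ)
    (hP : ∀ xy ∈ P, xy.1 ≠ xy.2 ∧ ∃ w : List A, actW δ xy.1 w = actW δ xy.2 w)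
    (hh : ∀ xy ∈ P, ∃ w : List A, w.length ≤ h ∧ actW δ xy.1 w = actW δ xy.2 w)
    (m : ℕ) (hm : 2 ≤ m) (hmn : m ≤ Fintype.card Q)
    (hp : ∃ (M : Fin p → Finset Q) (x y : Fin p → Q),
      (∀ i, (M i).card = m) ∧ (∀ i, x i ∈ M i ∧ y i ∈ M i) ∧
      (∀ i j, j < i → x i ∉ M j ∨ y i ∉ M j) ∧
      (∀ i, (x i, y i) ∈ P ∨ (y i, x i) ∈ P))
    (M : Finset Q) (hM : M.card = m)
    (hMc : ∃ w : List A, (M.image (fun q => actW δ q w)).card < M.card) :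
    ∃ w : List A, (M.image (fun q => actW δ q w)).card < M.card ∧
      w.length + p ≤ Nat.choose (Fintype.card Q - m + 2) 2 + h := by
  classical
  obtain ⟨Mp, xp, yp, hpcard, hpmem, hpcond, hpP⟩ := hp
  set imgM : List A → Finset Q := fun w => M.image (fun q => actW δ q w) with himgM
  have himg_append : ∀ w₁ w₂ : List A,
      imgM (w₁ ++ w₂) = (imgM w₁).image (fun q => actW δ q w₂) := by
    intro w₁ w₂
    rw [himgM]
    simp only [Finset.image_image]
    apply Finset.image_congr
    intro q _
    exact actW_append δ q w₁ w₂
  set Pred : List A → Prop := fun w => (imgM w).card < m ∨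
    ∃ z : Q × Q, z ∈ P ∧ z.1 ∈ imgM w ∧ z.2 ∈ imgM w with hPred
  have hnon : {k | ∃ w : List A, w.length = k ∧ Pred w}.Nonempty := by
    obtain ⟨w, hw⟩ := hMc
    exact ⟨w.length, w, rfl, Or.inl (by rw [hM] at hw; exact hw)⟩
  set k₀ := sInf {k | ∃ w : List A, w.length = k ∧ Pred w} with hk₀
  obtain ⟨u, hulen, hu⟩ := Nat.sInf_mem hnon
  rw [← hk₀] at hulen
  have hmin : ∀ w : List A, Pred w → k₀ ≤ w.length := fun w hw => Nat.sInf_le ⟨w, rfl, hw⟩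
  -- images along proper prefixes have card m and contain no pair of P
  have htklen : ∀ j, j ≤ k₀ → (u.take j).length = j := by
    intro j hj
    rw [List.length_take, hulen]
    omega
  have hchaincard : ∀ j, j < k₀ → (imgM (u.take j)).card = m := by
    intro j hj
    have hle : (imgM (u.take j)).card ≤ m := hM ▸ Finset.card_image_le
    by_contra hne
    have : Pred (u.take j) := Or.inl (by omega)
    have := hmin _ this
    rw [htklen j (le_of_lt hj)] at this
    omega
  have hchainP : ∀ j, j < k₀ → ∀ z : Q × Q, z ∈ P →
      ¬(z.1 ∈ imgM (u.take j) ∧ z.2 ∈ imgM (u.take j)) := by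
    intro j hj z hz hmem
    have : Pred (u.take j) := Or.inr ⟨z, hz, hmem.1, hmem.2⟩
    have := hmin _ this
    rw [htklen j (le_of_lt hj)] at this
    omega
  -- obtain the two tracked states
  obtain ⟨ξ, η, hξ, hη, hmerge, hdist⟩ :
      ∃ ξ η : Q, ξ ∈ M ∧ η ∈ M ∧
        (actW δ ξ u = actW δ η u ∨
          ∃ z : Q × Q, z ∈ P ∧ z.1 = actW δ ξ u ∧ z.2 = actW δ η u) ∧
        (∀ i, i < k₀ → actW δ ξ (u.take i) ≠ actW δ η (u.take i)) := by
    rcases hu with hcardlt | ⟨z, hzP, hz1, hz2⟩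
    · -- compression case
      have hk0pos : 1 ≤ k₀ := by
        by_contra hk
        have hk0 : k₀ = 0 := by omega
        have hu0 : u = [] := List.length_eq_zero_iff.mp (by omega)
        rw [hu0] at hcardlt
        have himgnil : imgM [] = M := by
          rw [himgM]
          ext z
          simp [actW]
        rw [himgnil, hM] at hcardlt
        omega
      set w1 := u.take (k₀ - 1) with hw1
      have hw1drop : w1 ++ u.drop (k₀ - 1) = u := List.take_append_drop _ _
      have hmapsto : ∀ q ∈ imgM w1, actW δ q (u.drop (k₀ - 1)) ∈ imgM u := by
        intro q hq
        obtain ⟨c, hc, rfl⟩ := Finset.mem_image.mp hq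
        rw [← actW_append, hw1drop]
        exact Finset.mem_image.mpr ⟨c, hc, rfl⟩
      have hcards : (imgM u).card < (imgM w1).card := by
        rw [hchaincard (k₀ - 1) (by omega)]
        exact hcardlt
      obtain ⟨z₁, hz₁, z₂, hz₂, hzne, hzeq⟩ :=
        Finset.exists_ne_map_eq_of_card_lt_of_maps_to hcards hmapsto
      obtain ⟨ξ, hξ, hξ1⟩ := Finset.mem_image.mp hz₁
      obtain ⟨η, hη, hη1⟩ := Finset.mem_image.mp hz₂
      refine ⟨ξ, η, hξ, hη, Or.inl ?_, ?_⟩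
      · rw [← hw1drop, actW_append, actW_append, hξ1, hη1]
        exact hzeq
      · intro i hik hcontra
        apply hzne
        have hi1 : i ≤ k₀ - 1 := by omega
        have htt : u.take i = w1.take i := by
          rw [hw1, List.take_take]
          congr 1
          omega
        have h1 : z₁ = actW δ (actW δ ξ (u.take i)) (w1.drop i) := by
          rw [← hξ1, htt, ← actW_append, List.take_append_drop]
        have h2 : z₂ = actW δ (actW δ η (u.take i)) (w1.drop i) := by
          rw [← hη1, htt, ← actW_append, List.take_append_drop]
        rw [h1, h2, hcontra]
    · -- P-pair case
      obtain ⟨ξ, hξ, hξ1⟩ := Finset.mem_image.mp hz1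
      obtain ⟨η, hη, hη1⟩ := Finset.mem_image.mp hz2
      refine ⟨ξ, η, hξ, hη, Or.inr ⟨z, hzP, hξ1.symm, hη1.symm⟩, ?_⟩
      intro i hik hcontra
      have hne := (hP z hzP).1
      apply hne
      rw [← hξ1, ← hη1, ← List.take_append_drop i u, actW_append, actW_append, hcontra]
  -- build the Frankl-Pin sequence of length k₀ + p
  have hbound : k₀ + p ≤ (Fintype.card Q - m + 2).choose 2 := by
    have hcast : ∀ i : Fin (k₀ + p), ¬ (i : ℕ) < k₀ → (i : ℕ) - k₀ < p := by
      intro i hi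
      have := i.isLt
      omega
    set N' : Fin (k₀ + p) → Finset Q := fun i =>
      if h : (i : ℕ) < k₀ then imgM (u.take i) else Mp ⟨(i : ℕ) - k₀, hcast i h⟩ with hN'
    set x' : Fin (k₀ + p) → Q := fun i =>
      if h : (i : ℕ) < k₀ then actW δ ξ (u.take i) else xp ⟨(i : ℕ) - k₀, hcast i h⟩ with hx'
    set y' : Fin (k₀ + p) → Q := fun i =>
      if h : (i : ℕ) < k₀ then actW δ η (u.take i) else yp ⟨(i : ℕ) - k₀, hcast i h⟩ with hy'
    have := frankl_bound m (k₀ + p) N' x' y' ?_ ?_ ?_ ?_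
    · exact this
    · intro i
      by_cases hi : (i : ℕ) < k₀
      · simp only [hN', dif_pos hi]; exact hchaincard _ hi
      · simp only [hN', dif_neg hi]; exact hpcard _
    · intro i
      by_cases hi : (i : ℕ) < k₀
      · simp only [hN', hx', dif_pos hi]
        exact Finset.mem_image.mpr ⟨ξ, hξ, rfl⟩
      · simp only [hN', hx', dif_neg hi]; exact (hpmem _).1
    · intro i
      by_cases hi : (i : ℕ) < k₀
      · simp only [hN', hy', dif_pos hi]
        exact Finset.mem_image.mpr ⟨η, hη, rfl⟩
      · simp only [hN', hy', dif_neg hi]; exact (hpmem _).2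
    · intro i j hji
      by_contra hcon
      push_neg at hcon
      obtain ⟨hxin, hyin⟩ := hcon
      have hjilt : (j : ℕ) < (i : ℕ) := hji
      by_cases hi : (i : ℕ) < k₀
      · -- both chain
        have hj : (j : ℕ) < k₀ := by omega
        simp only [hx', hN', dif_pos hi, dif_pos hj] at hxin
        simp only [hy', hN', dif_pos hi, dif_pos hj] at hyin
        -- consider the word u.take j ++ u.drop i
        set w' := u.take (j : ℕ) ++ u.drop (i : ℕ) with hw'
        have hw'len : w'.length = (j : ℕ) + (k₀ - (i : ℕ)) := by
          rw [hw', List.length_append, htklen _ (by omega), List.length_drop, hulen]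
        have himgw' : imgM w' = (imgM (u.take (j : ℕ))).image
            (fun q => actW δ q (u.drop (i : ℕ))) := himg_append _ _
        have hxmem' : actW δ ξ u ∈ imgM w' := by
          rw [himgw']
          refine Finset.mem_image.mpr ⟨actW δ ξ (u.take (i : ℕ)), hxin, ?_⟩
          rw [← actW_append, List.take_append_drop]
        have hymem' : actW δ η u ∈ imgM w' := by
          rw [himgw']
          refine Finset.mem_image.mpr ⟨actW δ η (u.take (i : ℕ)), hyin, ?_⟩
          rw [← actW_append, List.take_append_drop]
        have hPred : Pred w' := by
          rcases hmerge with heq | ⟨z, hzP, hz1, hz2⟩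
          · left
            rw [himgw']
            have hcardj : (imgM (u.take (j : ℕ))).card = m := hchaincard _ hj
            rw [← hcardj]
            apply card_image_lt hxin hyin (hdist _ hi)
            have hkey : actW δ ξ (u.take (i : ℕ) ++ u.drop (i : ℕ))
                = actW δ η (u.take (i : ℕ) ++ u.drop (i : ℕ)) := by
              rw [List.take_append_drop]
              exact heq
            rw [actW_append, actW_append] at hkey
            exact hkey
          · exact Or.inr ⟨z, hzP, hz1 ▸ hxmem', hz2 ▸ hymem'⟩
        have := hmin _ hPred
        omega
      · by_cases hj : (j : ℕ) < k₀
        · -- i from given sequence, j chain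
          simp only [hx', hN', dif_neg hi, dif_pos hj] at hxin
          simp only [hy', hN', dif_neg hi, dif_pos hj] at hyin
          have hPred : Pred (u.take (j : ℕ)) := by
            rcases hpP ⟨(i : ℕ) - k₀, hcast i hi⟩ with hz | hz
            · exact Or.inr ⟨_, hz, hxin, hyin⟩
            · exact Or.inr ⟨_, hz, hyin, hxin⟩
          have := hmin _ hPred
          rw [htklen _ (le_of_lt hj)] at this
          omega
        · -- both from given sequence
          simp only [hx', hN', dif_neg hi, dif_neg hj] at hxin
          simp only [hy', hN', dif_neg hi, dif_neg hj] at hyin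
          have := hpcond ⟨(i : ℕ) - k₀, hcast i hi⟩ ⟨(j : ℕ) - k₀, hcast j hj⟩ (by
            simp only [Fin.mk_lt_mk]
            omega)
          rcases this with hc | hc
          · exact hc hxin
          · exact hc hyin
  -- produce the final word
  by_cases hcA : (imgM u).card < m
  · refine ⟨u, by rw [hM]; exact hcA, ?_⟩
    rw [hulen]
    omega
  · rcases hu with hc | ⟨z, hzP, hz1, hz2⟩
    · exact absurd hc hcA
    obtain ⟨v, hvlen, hveq⟩ := hh z hzP
    refine ⟨u ++ v, ?_, ?_⟩
    · rw [hM]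
      have himg2 : imgM (u ++ v) = (imgM u).image (fun q => actW δ q v) := himg_append _ _
      have hcardu : (imgM u).card = m := by
        have : (imgM u).card ≤ m := hM ▸ Finset.card_image_le
        omega
      rw [show M.image (fun q => actW δ q (u ++ v)) = imgM (u ++ v) from rfl, himg2, ← hcardu]
      exact card_image_lt hz1 hz2 (hP z hzP).1 hveq
    · rw [List.length_append, hulen]
      omega
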